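/- Let h : [0,∞) → ℝ be differentiable and satisfy h'(t) ≤ -a₁·max(0, h(t))^{γ₁} - a₂·max(0, h(t))^{γ₂} for all t, with a₁, a₂ > 0, γ₁ > 1, 0 < γ₂ < 1. Then (i) h(t) ≤ 0 for all t ≥ T := 1/(a₁(γ₁-1)) + 1/(a₂(1-γ₂)), regardless of h(0); and (ii) if h(t₀) ≤ 0 for some t₀, then h(t) ≤ 0 for all t ≥ t₀. -/
import Mathlib

/-- Reach-and-stay: under `h' ≤ -a₁ max(0,h)^{γ₁} - a₂ max(0,h)^{γ₂}`,
(i) `h ≤ 0` after the prescribed time, and (ii) `{h ≤ 0}` is forward invariant. -/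
theorem reach_and_stay
    (h : ℝ → ℝ) (hdiff : Differentiable ℝ h)
    (a₁ a₂ γ₁ γ₂ : ℝ) (ha₁ : 0 < a₁) (ha₂ : 0 < a₂)
    (hγ₁ : 1 < γ₁) (hγ₂0 : 0 < γ₂) (hγ₂1 : γ₂ < 1)
    (hineq : ∀ t, 0 ≤ t →
      deriv h t ≤ -a₁ * max 0 (h t) ^ γ₁ - a₂ * max 0 (h t) ^ γ₂) :
    (∀ t, 1 / (a₁ * (γ₁ - 1)) + 1 / (a₂ * (1 - γ₂)) ≤ t → h t ≤ 0) ∧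
    (∀ t₀, 0 ≤ t₀ → h t₀ ≤ 0 → ∀ t, t₀ ≤ t → h t ≤ 0) := by
  have hcont : Continuous h := hdiff.continuous
  have hderiv_neg : ∀ t, 0 ≤ t → 0 < h t → deriv h t < 0 := by
    intro t ht hpos
    have hie := hineq t ht
    rw [max_eq_right hpos.le] at hie
    have h1 : 0 < h t ^ γ₁ := Real.rpow_pos_of_pos hpos _
    have h2 : 0 < h t ^ γ₂ := Real.rpow_pos_of_pos hpos _
    nlinarith
  -- forward invariance of {h ≤ c} for c ≥ 0
  have stay : ∀ c : ℝ, 0 ≤ c → ∀ t₀, 0 ≤ t₀ → h t₀ ≤ c → ∀ t, t₀ ≤ t → h t ≤ c := by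
    intro c hc t₀ ht₀ h₀ t htt
    by_contra hgt
    push_neg at hgt
    set S := Set.Icc t₀ t ∩ h ⁻¹' Set.Iic c with hS
    have hSne : S.Nonempty := ⟨t₀, ⟨le_refl _, htt⟩, h₀⟩
    have hScl : IsClosed S := isClosed_Icc.inter (isClosed_Iic.preimage hcont)
    have hSbd : BddAbove S := ⟨t, fun u hu => hu.1.2⟩
    set s := sSup S with hs
    have hsS : s ∈ S := hScl.csSup_mem hSne hSbd
    have hst : s < t := lt_of_le_of_ne hsS.1.2 (by
      intro he; rw [he] at hsS; exact absurd hsS.2 (not_le.2 hgt))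
    have hpos : ∀ u, s < u → u ≤ t → c < h u := by
      intro u hsu hut
      by_contra hle
      push_neg at hle
      have hu : u ∈ S := ⟨⟨le_trans hsS.1.1 hsu.le, hut⟩, hle⟩
      exact absurd (le_csSup hSbd hu) (not_le.2 hsu)
    have hanti : StrictAntiOn h (Set.Icc s t) := by
      apply strictAntiOn_of_deriv_neg (convex_Icc s t) hcont.continuousOn
      intro x hx
      rw [interior_Icc] at hx
      exact hderiv_neg x (le_trans ht₀ (le_trans hsS.1.1 hx.1.le))
        (lt_of_le_of_lt hc (hpos x hx.1 hx.2.le))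
    have hlt := hanti (Set.left_mem_Icc.2 hst.le) (Set.right_mem_Icc.2 hst.le) hst
    have := hsS.2
    simp only [Set.mem_preimage, Set.mem_Iic] at this
    linarith
  set T₁ := 1 / (a₁ * (γ₁ - 1)) with hT₁
  set T₂ := 1 / (a₂ * (1 - γ₂)) with hT₂
  have hK₁ : 0 < a₁ * (γ₁ - 1) := mul_pos ha₁ (by linarith)
  have hK₂ : 0 < a₂ * (1 - γ₂) := mul_pos ha₂ (by linarith)
  have hT₁pos : 0 < T₁ := by rw [hT₁]; positivity
  have hT₂pos : 0 < T₂ := by rw [hT₂]; positivity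
  -- Claim A: h reaches ≤ 1 within time T₁
  have claimA : ∃ t₁ ∈ Set.Icc (0:ℝ) T₁, h t₁ ≤ 1 := by
    by_contra hA
    push_neg at hA
    set p := 1 - γ₁ with hp
    have hAx : ∀ x ∈ Set.Icc (0:ℝ) T₁, 0 < h x := fun x hx =>
      lt_trans one_pos (hA x hx)
    have hderivu : ∀ x ∈ Set.Icc (0:ℝ) T₁,
        HasDerivAt (fun y => h y ^ p) (deriv h x * p * h x ^ (p - 1)) x := by
      intro x hx
      exact (hdiff x).hasDerivAt.rpow_const (Or.inl (ne_of_gt (hAx x hx)))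
    have hcontu : ContinuousOn (fun y => h y ^ p) (Set.Icc (0:ℝ) T₁) :=
      fun x hx => ((hderivu x hx).differentiableAt).continuousAt.continuousWithinAt
    have hdiffu : DifferentiableOn ℝ (fun y => h y ^ p) (interior (Set.Icc (0:ℝ) T₁)) :=
      fun x hx => ((hderivu x (interior_subset hx)).differentiableAt).differentiableWithinAt
    have key : ∀ x ∈ interior (Set.Icc (0:ℝ) T₁),
        a₁ * (γ₁ - 1) ≤ deriv (fun y => h y ^ p) x := by
      intro x hx
      have hxIcc : x ∈ Set.Icc (0:ℝ) T₁ := interior_subset hx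
      rw [interior_Icc] at hx
      have hhx : 0 < h x := hAx x hxIcc
      have hie := hineq x hx.1.le
      rw [max_eq_right hhx.le] at hie
      have h2 : 0 < h x ^ γ₂ := Real.rpow_pos_of_pos hhx _
      have hd1 : deriv h x ≤ -a₁ * h x ^ γ₁ := by nlinarith
      have hBpos : 0 < h x ^ (p - 1) := Real.rpow_pos_of_pos hhx _
      have hnp : p * h x ^ (p - 1) ≤ 0 := by
        apply mul_nonpos_of_nonpos_of_nonneg _ hBpos.le
        rw [hp]; linarith
      have hpow : h x ^ γ₁ * h x ^ (p - 1) = 1 := by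
        rw [← Real.rpow_add hhx, show γ₁ + (p - 1) = 0 by rw [hp]; ring, Real.rpow_zero]
      have heq : (-a₁ * h x ^ γ₁) * (p * h x ^ (p - 1)) = a₁ * (γ₁ - 1) := by
        rw [hp]; linear_combination (a₁ * (γ₁ - 1)) * hpow
      rw [(hderivu x hxIcc).deriv, mul_assoc]
      calc a₁ * (γ₁ - 1) = (-a₁ * h x ^ γ₁) * (p * h x ^ (p - 1)) := heq.symm
        _ ≤ deriv h x * (p * h x ^ (p - 1)) := mul_le_mul_of_nonpos_right hd1 hnp
    have hmain := (convex_Icc (0:ℝ) T₁).mul_sub_le_image_sub_of_le_deriv hcontu hdiffu key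
      0 (Set.left_mem_Icc.2 hT₁pos.le) T₁ (Set.right_mem_Icc.2 hT₁pos.le) hT₁pos.le
    have hCT : a₁ * (γ₁ - 1) * (T₁ - 0) = 1 := by
      rw [hT₁, sub_zero, mul_one_div_cancel hK₁.ne']
    rw [hCT] at hmain
    have hu0 : 0 < h 0 ^ p :=
      Real.rpow_pos_of_pos (hAx 0 (Set.left_mem_Icc.2 hT₁pos.le)) _
    have huT : h T₁ ^ p < 1 :=
      Real.rpow_lt_one_of_one_lt_of_neg (hA T₁ (Set.right_mem_Icc.2 hT₁pos.le)) (by rw [hp]; linarith)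
    linarith
  -- Claim B: from h t₁ ≤ 1, h reaches ≤ 0 within time T₂
  have claimB : ∀ t₁, 0 ≤ t₁ → h t₁ ≤ 1 → ∃ t₂ ∈ Set.Icc t₁ (t₁ + T₂), h t₂ ≤ 0 := by
    intro t₁ ht₁ h₁
    by_contra hB
    push_neg at hB
    set q := 1 - γ₂ with hq
    have hq0 : 0 < q := by rw [hq]; linarith
    have hderivv : ∀ x ∈ Set.Icc t₁ (t₁ + T₂),
        HasDerivAt (fun y => h y ^ q) (deriv h x * q * h x ^ (q - 1)) x := by
      intro x hx
      exact (hdiff x).hasDerivAt.rpow_const (Or.inl (ne_of_gt (hB x hx)))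
    have hcontv : ContinuousOn (fun y => h y ^ q) (Set.Icc t₁ (t₁ + T₂)) :=
      fun x hx => ((hderivv x hx).differentiableAt).continuousAt.continuousWithinAt
    have hdiffv : DifferentiableOn ℝ (fun y => h y ^ q) (interior (Set.Icc t₁ (t₁ + T₂))) :=
      fun x hx => ((hderivv x (interior_subset hx)).differentiableAt).differentiableWithinAt
    have key : ∀ x ∈ interior (Set.Icc t₁ (t₁ + T₂)),
        deriv (fun y => h y ^ q) x ≤ -(a₂ * (1 - γ₂)) := by
      intro x hx
      have hxIcc : x ∈ Set.Icc t₁ (t₁ + T₂) := interior_subset hx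
      rw [interior_Icc] at hx
      have hhx : 0 < h x := hB x hxIcc
      have hie := hineq x (le_trans ht₁ hx.1.le)
      rw [max_eq_right hhx.le] at hie
      have h1 : 0 < h x ^ γ₁ := Real.rpow_pos_of_pos hhx _
      have hd2 : deriv h x ≤ -a₂ * h x ^ γ₂ := by nlinarith
      have hBpos : 0 < h x ^ (q - 1) := Real.rpow_pos_of_pos hhx _
      have hnp : 0 ≤ q * h x ^ (q - 1) := mul_nonneg hq0.le hBpos.le
      have hpow : h x ^ γ₂ * h x ^ (q - 1) = 1 := by
        rw [← Real.rpow_add hhx, show γ₂ + (q - 1) = 0 by rw [hq]; ring, Real.rpow_zero]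
      have heq : (-a₂ * h x ^ γ₂) * (q * h x ^ (q - 1)) = -(a₂ * (1 - γ₂)) := by
        rw [hq]; linear_combination (-(a₂ * (1 - γ₂))) * hpow
      rw [(hderivv x hxIcc).deriv, mul_assoc]
      calc deriv h x * (q * h x ^ (q - 1)) ≤ (-a₂ * h x ^ γ₂) * (q * h x ^ (q - 1)) :=
            mul_le_mul_of_nonneg_right hd2 hnp
        _ = -(a₂ * (1 - γ₂)) := heq
    have hmem1 : t₁ ∈ Set.Icc t₁ (t₁ + T₂) := Set.left_mem_Icc.2 (by linarith)
    have hmem2 : t₁ + T₂ ∈ Set.Icc t₁ (t₁ + T₂) := Set.right_mem_Icc.2 (by linarith)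
    have hmain := (convex_Icc t₁ (t₁ + T₂)).image_sub_le_mul_sub_of_deriv_le hcontv hdiffv key
      t₁ hmem1 (t₁ + T₂) hmem2 (by linarith)
    have hCT : -(a₂ * (1 - γ₂)) * (t₁ + T₂ - t₁) = -1 := by
      rw [show t₁ + T₂ - t₁ = T₂ by ring, hT₂, neg_mul, mul_one_div_cancel hK₂.ne']
    rw [hCT] at hmain
    have hv1 : h t₁ ^ q ≤ 1 :=
      Real.rpow_le_one (hB t₁ hmem1).le h₁ hq0.le
    have hv2 : 0 < h (t₁ + T₂) ^ q := Real.rpow_pos_of_pos (hB _ hmem2) _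
    linarith
  obtain ⟨t₁, ht₁, ht₁h⟩ := claimA
  obtain ⟨t₂, ht₂, ht₂h⟩ := claimB t₁ ht₁.1 ht₁h
  have ht₂0 : 0 ≤ t₂ := le_trans ht₁.1 ht₂.1
  have ht₂T : t₂ ≤ T₁ + T₂ := le_trans ht₂.2 (by linarith [ht₁.2])
  constructor
  · intro t ht
    exact stay 0 le_rfl t₂ ht₂0 ht₂h t (le_trans ht₂T ht)
  · exact stay 0 le_rfl
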